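/- Let V : ℝ² → ℝ be twice continuously differentiable with ∂V/∂x(0,y) = 0 for all y ∈ ℝ, let F : ℝ⁴ → ℝ be continuously differentiable and satisfy the libration-preserving condition, let E₀, ε₀ ∈ ℝ, and let w : U → ℝ be twice continuously differentiable on an open neighborhood U ⊆ ℝ⁴ of (0,0,ε₀,0) such that (1/2)p² + V(q, w(q,p,ε,δ)) + δ·F(q, w(q,p,ε,δ), p, 0) = ε + E₀ for all (q,p,ε,δ) ∈ U. Set y₀ := w(0,0,ε₀,0) and suppose ∂V/∂y(0,y₀) ≠ 0. Then ∂²w/∂q∂δ(0,0,ε₀,0) = 0 and ∂²w/∂p∂δ(0,0,ε₀,0) = 0. -/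

import Mathlib

private lemma keyG
    (V : ℝ × ℝ → ℝ) (hV : ContDiff ℝ 2 V)
    (F : ℝ × ℝ × ℝ × ℝ → ℝ) (hF : ContDiff ℝ 1 F)
    (E₀ : ℝ)
    (U : Set (ℝ × ℝ × ℝ × ℝ)) (hU : IsOpen U)
    (w : ℝ × ℝ × ℝ × ℝ → ℝ) (hw : ContDiffOn ℝ 2 w U)
    (himpl : ∀ u ∈ U,
      (1 / 2) * u.2.1 ^ 2 + V (u.1, w u) + u.2.2.2 * F (u.1, w u, u.2.1, 0)
        = u.2.2.1 + E₀)
    (u : ℝ × ℝ × ℝ × ℝ) (hu : u ∈ U) (d : ℝ × ℝ × ℝ × ℝ) :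
    u.2.1 * d.2.1 + fderiv ℝ V (u.1, w u) (d.1, fderiv ℝ w u d)
      + (d.2.2.2 * F (u.1, w u, u.2.1, 0)
         + u.2.2.2 * fderiv ℝ F (u.1, w u, u.2.1, 0) (d.1, fderiv ℝ w u d, d.2.1, 0))
      = d.2.2.1 := by
  set γ : ℝ → ℝ × ℝ × ℝ × ℝ := fun t => u + t • d with hγdef
  have hγ0 : γ 0 = u := by simp [hγdef]
  have hγ : HasDerivAt γ d 0 := by
    simpa [hγdef] using (((hasDerivAt_id (0:ℝ)).smul_const d).const_add u)
  have hc1 : HasDerivAt (fun t => (γ t).1) d.1 0 := by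
    exact ((ContinuousLinearMap.fst ℝ ℝ (ℝ × ℝ × ℝ)).hasFDerivAt.comp_hasDerivAt 0 hγ)
  have hc2 : HasDerivAt (fun t => (γ t).2.1) d.2.1 0 := by
    exact (((ContinuousLinearMap.fst ℝ ℝ (ℝ × ℝ)).comp
      (ContinuousLinearMap.snd ℝ ℝ (ℝ × ℝ × ℝ))).hasFDerivAt.comp_hasDerivAt 0 hγ)
  have hc3 : HasDerivAt (fun t => (γ t).2.2.1) d.2.2.1 0 := by
    exact (((ContinuousLinearMap.fst ℝ ℝ ℝ).comp
      ((ContinuousLinearMap.snd ℝ ℝ (ℝ × ℝ)).comp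
        (ContinuousLinearMap.snd ℝ ℝ (ℝ × ℝ × ℝ)))).hasFDerivAt.comp_hasDerivAt 0 hγ)
  have hc4 : HasDerivAt (fun t => (γ t).2.2.2) d.2.2.2 0 := by
    exact (((ContinuousLinearMap.snd ℝ ℝ ℝ).comp
      ((ContinuousLinearMap.snd ℝ ℝ (ℝ × ℝ)).comp
        (ContinuousLinearMap.snd ℝ ℝ (ℝ × ℝ × ℝ)))).hasFDerivAt.comp_hasDerivAt 0 hγ)
  have hwdiff : DifferentiableAt ℝ w u :=
    (hw.differentiableOn two_ne_zero).differentiableAt (hU.mem_nhds hu)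
  have hω : HasDerivAt (fun t => w (γ t)) (fderiv ℝ w u d) 0 := by
    have h := (hγ0 ▸ hwdiff.hasFDerivAt :
      HasFDerivAt w (fderiv ℝ w u) (γ 0)).comp_hasDerivAt 0 hγ
    exact h
  have hVt : HasDerivAt (fun t => V ((γ t).1, w (γ t)))
      (fderiv ℝ V (u.1, w u) (d.1, fderiv ℝ w u d)) 0 := by
    have hpt : ((γ 0).1, w (γ 0)) = (u.1, w u) := by rw [hγ0]
    have h := (hpt ▸ (hV.differentiable two_ne_zero (u.1, w u)).hasFDerivAt :
        HasFDerivAt V (fderiv ℝ V (u.1, w u)) ((γ 0).1, w (γ 0))).comp_hasDerivAt 0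
      (hc1.prodMk hω)
    exact h
  have hFt : HasDerivAt (fun t => F ((γ t).1, w (γ t), (γ t).2.1, 0))
      (fderiv ℝ F (u.1, w u, u.2.1, 0) (d.1, fderiv ℝ w u d, d.2.1, 0)) 0 := by
    have hpt : ((γ 0).1, w (γ 0), (γ 0).2.1, (0:ℝ)) = (u.1, w u, u.2.1, 0) := by rw [hγ0]
    have h := (hpt ▸ (hF.differentiable one_ne_zero (u.1, w u, u.2.1, 0)).hasFDerivAt :
        HasFDerivAt F (fderiv ℝ F (u.1, w u, u.2.1, 0)) ((γ 0).1, w (γ 0), (γ 0).2.1, 0)).comp_hasDerivAt 0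
      (hc1.prodMk (hω.prodMk (hc2.prodMk (hasDerivAt_const 0 (0:ℝ)))))
    exact h
  have hsq : HasDerivAt (fun t => (1/2 : ℝ) * (γ t).2.1 ^ 2) (u.2.1 * d.2.1) 0 := by
    have h := (hc2.pow 2).const_mul (1/2 : ℝ)
    have h20 : (γ 0).2.1 = u.2.1 := by rw [hγ0]
    refine h.congr_deriv ?_
    rw [h20]; ring
  have hmul : HasDerivAt (fun t => (γ t).2.2.2 * F ((γ t).1, w (γ t), (γ t).2.1, 0))
      (d.2.2.2 * F (u.1, w u, u.2.1, 0)
        + u.2.2.2 * fderiv ℝ F (u.1, w u, u.2.1, 0) (d.1, fderiv ℝ w u d, d.2.1, 0)) 0 := by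
    have h := hc4.mul hFt
    have h40 : (γ 0).2.2.2 = u.2.2.2 := by rw [hγ0]
    have hpt : ((γ 0).1, w (γ 0), (γ 0).2.1, (0:ℝ)) = (u.1, w u, u.2.1, 0) := by rw [hγ0]
    refine h.congr_deriv ?_
    rw [h40, hpt]
  have hG : HasDerivAt
      (fun t => (1/2 : ℝ) * (γ t).2.1 ^ 2 + V ((γ t).1, w (γ t))
        + (γ t).2.2.2 * F ((γ t).1, w (γ t), (γ t).2.1, 0))
      (u.2.1 * d.2.1 + fderiv ℝ V (u.1, w u) (d.1, fderiv ℝ w u d)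
        + (d.2.2.2 * F (u.1, w u, u.2.1, 0)
           + u.2.2.2 * fderiv ℝ F (u.1, w u, u.2.1, 0) (d.1, fderiv ℝ w u d, d.2.1, 0))) 0 :=
    (hsq.add hVt).add hmul
  have hRHS : HasDerivAt (fun t => (γ t).2.2.1 + E₀) d.2.2.1 0 := hc3.add_const E₀
  have hγU : ∀ᶠ t in nhds 0, γ t ∈ U := by
    have := hγ.continuousAt.preimage_mem_nhds (by rw [hγ0]; exact hU.mem_nhds hu)
    exact this
  have heq : (fun t => (1/2 : ℝ) * (γ t).2.1 ^ 2 + V ((γ t).1, w (γ t))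
        + (γ t).2.2.2 * F ((γ t).1, w (γ t), (γ t).2.1, 0))
      =ᶠ[nhds 0] fun t => (γ t).2.2.1 + E₀ := by
    filter_upwards [hγU] with t ht
    exact himpl (γ t) ht
  exact hG.unique (hRHS.congr_of_eventuallyEq heq)


private lemma auxdir
    (V : ℝ × ℝ → ℝ) (hV : ContDiff ℝ 2 V)
    (hlibV : ∀ y : ℝ, fderiv ℝ V (0, y) (1, 0) = 0)
    (F : ℝ × ℝ × ℝ × ℝ → ℝ) (hF : ContDiff ℝ 1 F)
    (ε₀ : ℝ)
    (U : Set (ℝ × ℝ × ℝ × ℝ)) (hU : IsOpen U)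
    (hmem : ((0 : ℝ), (0 : ℝ), ε₀, (0 : ℝ)) ∈ U)
    (w : ℝ × ℝ × ℝ × ℝ → ℝ) (hw : ContDiffOn ℝ 2 w U)
    (key1 : ∀ u ∈ U,
      fderiv ℝ V (u.1, w u) (0, fderiv ℝ w u (0, 0, 0, 1))
        + (u.2.2.2 * fderiv ℝ F (u.1, w u, u.2.1, 0) (0, fderiv ℝ w u (0, 0, 0, 1), 0, 0)
           + F (u.1, w u, u.2.1, 0)) = 0)
    (hVy : fderiv ℝ V (0, w (0, 0, ε₀, 0)) (0, 1) ≠ 0)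
    (v : ℝ × ℝ × ℝ × ℝ) (hv1 : v.2.2.1 = 0) (hv2 : v.2.2.2 = 0)
    (hwv : fderiv ℝ w (0, 0, ε₀, 0) v = 0)
    (hFv : fderiv ℝ F (0, w (0, 0, ε₀, 0), 0, 0) (v.1, 0, v.2.1, 0) = 0) :
    fderiv ℝ (fun u => fderiv ℝ w u (0, 0, 0, 1)) (0, 0, ε₀, 0) v = 0 := by
  set x₀ : ℝ × ℝ × ℝ × ℝ := (0, 0, ε₀, 0) with hx₀def
  set γ : ℝ → ℝ × ℝ × ℝ × ℝ := fun t => x₀ + t • v with hγdef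
  have hγ0 : γ 0 = x₀ := by simp [hγdef]
  have hγ : HasDerivAt γ v 0 := by
    simpa [hγdef] using (((hasDerivAt_id (0:ℝ)).smul_const v).const_add x₀)
  have hc1 : HasDerivAt (fun t => (γ t).1) v.1 0 := by
    exact ((ContinuousLinearMap.fst ℝ ℝ (ℝ × ℝ × ℝ)).hasFDerivAt.comp_hasDerivAt 0 hγ)
  have hc2 : HasDerivAt (fun t => (γ t).2.1) v.2.1 0 := by
    exact (((ContinuousLinearMap.fst ℝ ℝ (ℝ × ℝ)).comp
      (ContinuousLinearMap.snd ℝ ℝ (ℝ × ℝ × ℝ))).hasFDerivAt.comp_hasDerivAt 0 hγ)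
  have hγ4 : ∀ t, (γ t).2.2.2 = 0 := by
    intro t; simp [hγdef, hx₀def, hv2]
  have hγ10 : (γ 0).1 = 0 := by rw [hγ0]
  have hγ20 : (γ 0).2.1 = 0 := by rw [hγ0]
  -- the functions along the curve
  set ω : ℝ → ℝ := fun t => w (γ t) with hωdef
  set φ : ℝ → ℝ := fun t => fderiv ℝ w (γ t) (0, 0, 0, 1) with hφdef
  set A : ℝ → ℝ := fun t => fderiv ℝ V ((γ t).1, ω t) (0, 1) with hAdef
  set N : ℝ → ℝ := fun t => F ((γ t).1, ω t, (γ t).2.1, 0) with hNdef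
  have hγU : ∀ᶠ t in nhds 0, γ t ∈ U := by
    have := hγ.continuousAt.preimage_mem_nhds (by rw [hγ0]; exact hU.mem_nhds hmem)
    exact this
  -- the identity along the curve
  have hline : (fun t => A t * φ t + N t) =ᶠ[nhds 0] fun _ => (0:ℝ) := by
    filter_upwards [hγU] with t ht
    have h := key1 (γ t) ht
    rw [hγ4 t, zero_mul, zero_add] at h
    have hsm : ((0:ℝ), φ t) = φ t • ((0:ℝ), (1:ℝ)) := by simp
    calc A t * φ t + N t
        = fderiv ℝ V ((γ t).1, ω t) (0, φ t) + N t := by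
          rw [hsm, map_smul, smul_eq_mul, mul_comm]
      _ = 0 := h
  -- derivative of ω
  have hwdiff : DifferentiableAt ℝ w x₀ :=
    (hw.differentiableOn two_ne_zero).differentiableAt (hU.mem_nhds hmem)
  have hω : HasDerivAt ω 0 0 := by
    have h := (hγ0 ▸ hwdiff.hasFDerivAt :
      HasFDerivAt w (fderiv ℝ w x₀) (γ 0)).comp_hasDerivAt 0 hγ
    rw [hwv] at h
    exact h
  -- derivative of φ
  have hfd : ContDiffOn ℝ 1 (fun u => fderiv ℝ w u) U := by
    have h := hw.fderivWithin (m := 1) hU.uniqueDiffOn (by norm_num)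
    exact h.congr fun u hu => (fderivWithin_of_isOpen hU hu).symm
  have hgdiff : DifferentiableAt ℝ (fun u => fderiv ℝ w u (0, 0, 0, 1)) x₀ := by
    have h1 : DifferentiableAt ℝ (fun u => fderiv ℝ w u) x₀ :=
      (hfd.differentiableOn one_ne_zero).differentiableAt (hU.mem_nhds hmem)
    exact h1.clm_apply (differentiableAt_const _)
  have hφ : HasDerivAt φ (fderiv ℝ (fun u => fderiv ℝ w u (0, 0, 0, 1)) x₀ v) 0 := by
    have h := (hγ0 ▸ hgdiff.hasFDerivAt :
      HasFDerivAt (fun u => fderiv ℝ w u (0, 0, 0, 1))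
        (fderiv ℝ (fun u => fderiv ℝ w u (0, 0, 0, 1)) x₀) (γ 0)).comp_hasDerivAt 0 hγ
    exact h
  -- derivative of N
  have hω00 : ω 0 = w x₀ := by rw [hωdef]; simp [hγ0]
  have hN : HasDerivAt N 0 0 := by
    have hpt : ((γ 0).1, ω 0, (γ 0).2.1, (0:ℝ)) = ((0:ℝ), w x₀, (0:ℝ), (0:ℝ)) := by
      rw [hγ10, hγ20, hω00]
    have h := (hpt ▸ (hF.differentiable one_ne_zero ((0:ℝ), w x₀, (0:ℝ), (0:ℝ))).hasFDerivAt :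
        HasFDerivAt F (fderiv ℝ F ((0:ℝ), w x₀, (0:ℝ), (0:ℝ)))
          ((γ 0).1, ω 0, (γ 0).2.1, 0)).comp_hasDerivAt 0
      (hc1.prodMk (hω.prodMk (hc2.prodMk (hasDerivAt_const 0 (0:ℝ)))))
    rw [show (fderiv ℝ F ((0:ℝ), w x₀, (0:ℝ), (0:ℝ))) (v.1, 0, v.2.1, 0) = 0 from hFv] at h
    exact h
  -- derivative of A
  have hVfd : Differentiable ℝ (fderiv ℝ V) :=
    (hV.fderiv_right (le_refl 2)).differentiable one_ne_zero
  have hf'' : HasFDerivAt (fderiv ℝ V) (fderiv ℝ (fderiv ℝ V) ((0:ℝ), w x₀)) ((0:ℝ), w x₀) :=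
    (hVfd ((0:ℝ), w x₀)).hasFDerivAt
  set f'' := fderiv ℝ (fderiv ℝ V) ((0:ℝ), w x₀) with hf''def
  have hBdiff : Differentiable ℝ (fun z : ℝ × ℝ => fderiv ℝ V z ((0:ℝ), (1:ℝ))) :=
    hVfd.clm_apply (differentiable_const _)
  have hfderivB : fderiv ℝ (fun z : ℝ × ℝ => fderiv ℝ V z ((0:ℝ), (1:ℝ))) ((0:ℝ), w x₀) (v.1, 0)
      = f'' (v.1, 0) (0, 1) := by
    rw [fderiv_clm_apply (hVfd _) (differentiableAt_const _)]
    simp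
    rfl
  -- symmetry of the second derivative
  have hsymm : f'' (v.1, 0) (0, 1) = 0 := by
    have hsm : ((v.1 : ℝ), (0:ℝ)) = v.1 • ((1:ℝ), (0:ℝ)) := by simp
    rw [hsm, map_smul, ContinuousLinearMap.smul_apply]
    have h1 : f'' (1, 0) (0, 1) = f'' (0, 1) (1, 0) :=
      second_derivative_symmetric (fun y => ((hV.differentiable two_ne_zero) y).hasFDerivAt)
        hf'' _ _
    -- f'' (0,1) (1,0) is the derivative in the y-direction of z ↦ fderiv V z (1,0), which
    -- vanishes identically on the line x = 0.
    have hB'diff : Differentiable ℝ (fun z : ℝ × ℝ => fderiv ℝ V z ((1:ℝ), (0:ℝ))) :=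
      hVfd.clm_apply (differentiable_const _)
    have hfderivB' : fderiv ℝ (fun z : ℝ × ℝ => fderiv ℝ V z ((1:ℝ), (0:ℝ))) ((0:ℝ), w x₀) (0, 1)
        = f'' (0, 1) (1, 0) := by
      rw [fderiv_clm_apply (hVfd _) (differentiableAt_const _)]
      simp
      rfl
    have hcurve : HasDerivAt (fun y : ℝ => ((0:ℝ), y)) ((0:ℝ), (1:ℝ)) (w x₀) :=
      (hasDerivAt_const _ _).prodMk (hasDerivAt_id _)
    have hcomp : HasDerivAt (fun y : ℝ => fderiv ℝ V ((0:ℝ), y) ((1:ℝ), (0:ℝ)))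
        (fderiv ℝ (fun z : ℝ × ℝ => fderiv ℝ V z ((1:ℝ), (0:ℝ))) ((0:ℝ), w x₀) (0, 1)) (w x₀) :=
      (hB'diff _).hasFDerivAt.comp_hasDerivAt _ hcurve
    have hzero : HasDerivAt (fun y : ℝ => fderiv ℝ V ((0:ℝ), y) ((1:ℝ), (0:ℝ))) 0 (w x₀) := by
      have : (fun y : ℝ => fderiv ℝ V ((0:ℝ), y) ((1:ℝ), (0:ℝ))) = fun _ => (0:ℝ) := by
        funext y; exact hlibV y
      rw [this]; exact hasDerivAt_const _ _
    have h0 : fderiv ℝ (fun z : ℝ × ℝ => fderiv ℝ V z ((1:ℝ), (0:ℝ))) ((0:ℝ), w x₀) (0, 1) = 0 :=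
      hcomp.unique hzero
    rw [h1, ← hfderivB', h0, smul_zero]
  have hA : HasDerivAt A 0 0 := by
    have hpt : ((γ 0).1, ω 0) = ((0:ℝ), w x₀) := by rw [hγ10, hω00]
    have h := (hpt ▸ (hBdiff _).hasFDerivAt :
        HasFDerivAt (fun z : ℝ × ℝ => fderiv ℝ V z ((0:ℝ), (1:ℝ)))
          (fderiv ℝ (fun z : ℝ × ℝ => fderiv ℝ V z ((0:ℝ), (1:ℝ))) ((0:ℝ), w x₀))
          ((γ 0).1, ω 0)).comp_hasDerivAt 0 (hc1.prodMk hω)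
    rw [show fderiv ℝ (fun z : ℝ × ℝ => fderiv ℝ V z ((0:ℝ), (1:ℝ))) ((0:ℝ), w x₀) (v.1, 0) = 0
      from hfderivB.trans hsymm] at h
    exact h
  -- combine
  have hsum : HasDerivAt (fun t => A t * φ t + N t)
      (0 * φ 0 + A 0 * fderiv ℝ (fun u => fderiv ℝ w u (0, 0, 0, 1)) x₀ v + 0) 0 :=
    (hA.mul hφ).add hN
  have hconst : HasDerivAt (fun t => A t * φ t + N t) 0 0 :=
    (hasDerivAt_const 0 (0:ℝ)).congr_of_eventuallyEq hline
  have hfin := hsum.unique hconst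
  have hA0 : A 0 = fderiv ℝ V ((0:ℝ), w x₀) ((0:ℝ), (1:ℝ)) := by
    rw [hAdef]; simp only; rw [hγ10, hω00]
  rw [zero_mul, zero_add, add_zero] at hfin
  rcases mul_eq_zero.mp hfin with h | h
  · exact absurd (hA0 ▸ h) hVy
  · exact h

/-- The mixed second derivatives `∂²w/∂q∂δ` and `∂²w/∂p∂δ` of the deformed
starting point function `w(q,p,ε,δ)`, defined implicitly by
`(1/2)p² + V(q,w) + δ·F(q,w,p,0) = ε + E₀`, vanish at `(0,0,ε₀,0)`. -/
theorem deformed_starting_point_mixed_derivatives_vanish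
    (V : ℝ × ℝ → ℝ) (hV : ContDiff ℝ 2 V)
    (hlibV : ∀ y : ℝ, fderiv ℝ V (0, y) (1, 0) = 0)
    (F : ℝ × ℝ × ℝ × ℝ → ℝ) (hF : ContDiff ℝ 1 F)
    (hlibF : ∀ y py : ℝ,
      fderiv ℝ F (0, y, 0, py) (0, 0, 1, 0) = 0 ∧
      fderiv ℝ F (0, y, 0, py) (1, 0, 0, 0) = 0)
    (E₀ ε₀ : ℝ)
    (U : Set (ℝ × ℝ × ℝ × ℝ)) (hU : IsOpen U)
    (hmem : ((0 : ℝ), (0 : ℝ), ε₀, (0 : ℝ)) ∈ U)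
    (w : ℝ × ℝ × ℝ × ℝ → ℝ) (hw : ContDiffOn ℝ 2 w U)
    (himpl : ∀ u ∈ U,
      (1 / 2) * u.2.1 ^ 2 + V (u.1, w u) + u.2.2.2 * F (u.1, w u, u.2.1, 0)
        = u.2.2.1 + E₀)
    (hVy : fderiv ℝ V (0, w (0, 0, ε₀, 0)) (0, 1) ≠ 0) :
    fderiv ℝ (fun u => fderiv ℝ w u (0, 0, 0, 1)) (0, 0, ε₀, 0) (1, 0, 0, 0) = 0 ∧
    fderiv ℝ (fun u => fderiv ℝ w u (0, 0, 0, 1)) (0, 0, ε₀, 0) (0, 1, 0, 0) = 0 := by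
  have hK := fun u hu d => keyG V hV F hF E₀ U hU w hw himpl u hu d
  have key1 : ∀ u ∈ U,
      fderiv ℝ V (u.1, w u) (0, fderiv ℝ w u (0, 0, 0, 1))
        + (u.2.2.2 * fderiv ℝ F (u.1, w u, u.2.1, 0) (0, fderiv ℝ w u (0, 0, 0, 1), 0, 0)
           + F (u.1, w u, u.2.1, 0)) = 0 := by
    intro u hu
    have h := hK u hu (0, 0, 0, 1)
    simp only [mul_zero, zero_add, one_mul, mul_one] at h
    linarith
  have hwq : fderiv ℝ w (0, 0, ε₀, 0) (1, 0, 0, 0) = 0 := by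
    have h := hK (0, 0, ε₀, 0) hmem (1, 0, 0, 0)
    simp only [mul_zero, zero_mul, zero_add, add_zero] at h
    have hd : ((1:ℝ), fderiv ℝ w (0, 0, ε₀, 0) (1, 0, 0, 0))
        = ((1:ℝ), (0:ℝ)) + fderiv ℝ w (0, 0, ε₀, 0) (1, 0, 0, 0) • ((0:ℝ), (1:ℝ)) := by simp
    rw [hd, map_add, map_smul, smul_eq_mul, hlibV, zero_add] at h
    rcases mul_eq_zero.mp h with h' | h'
    · exact h'
    · exact absurd h' hVy
  have hwp : fderiv ℝ w (0, 0, ε₀, 0) (0, 1, 0, 0) = 0 := by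
    have h := hK (0, 0, ε₀, 0) hmem (0, 1, 0, 0)
    simp only [mul_zero, zero_mul, zero_add, add_zero, mul_one] at h
    have hd : ((0:ℝ), fderiv ℝ w (0, 0, ε₀, 0) (0, 1, 0, 0))
        = fderiv ℝ w (0, 0, ε₀, 0) (0, 1, 0, 0) • ((0:ℝ), (1:ℝ)) := by simp
    rw [hd, map_smul, smul_eq_mul] at h
    rcases mul_eq_zero.mp h with h' | h'
    · exact h'
    · exact absurd h' hVy
  constructor
  · exact auxdir V hV hlibV F hF ε₀ U hU hmem w hw key1 hVy
      (1, 0, 0, 0) rfl rfl hwq (hlibF (w (0, 0, ε₀, 0)) 0).2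
  · exact auxdir V hV hlibV F hF ε₀ U hU hmem w hw key1 hVy
      (0, 1, 0, 0) rfl rfl hwp (hlibF (w (0, 0, ε₀, 0)) 0).1
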